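/- In the setting of the Jordan basis U of BA with V = AU and Σ the Jordan form, the functions φ_i^{(j)}(x) = p(x)^T v_i^{(j)} (columns of V) satisfy the generalized eigenfunction relations for the integral operator: T_K φ_i^{(1)} = λ_i φ_i^{(1)} for each Jordan block i, and T_K φ_i^{(j+1)} = λ_i φ_i^{(j+1)} + φ_i^{(j)} for j = 1, ..., ℓ_i - 1. -/
import Mathlib

open MeasureTheory

lemma key_int (N M : ℕ) (a b : ℝ) (w : ℝ → ℂ)
    (p : Fin N → ℝ → ℂ) (q : Fin M → ℝ → ℂ)
    (A : Matrix (Fin N) (Fin M) ℂ) (B : Matrix (Fin M) (Fin N) ℂ)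
    (hInt : ∀ i j, IntegrableOn (fun x => p i x * q j x * w x) (Set.Icc a b))
    (hB : ∀ i j, B j i = ∫ x in Set.Icc a b, p i x * q j x * w x)
    (K : ℝ → ℝ → ℂ) (hK : ∀ x y, K x y = ∑ i, ∑ j, A i j * p i x * q j y)
    (c : Fin N → ℂ) (x : ℝ) :
    (∫ y in Set.Icc a b, K x y * (∑ k, c k * p k y) * w y)
      = ∑ n, A.mulVec (B.mulVec c) n * p n x := by
  have step1 : (∫ y in Set.Icc a b, K x y * (∑ k, c k * p k y) * w y)
      = ∫ y in Set.Icc a b, ∑ k, ∑ n, ∑ m,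
          (A n m * p n x * c k) * (p k y * q m y * w y) := by
    apply setIntegral_congr_fun measurableSet_Icc
    intro y _
    simp only [hK]
    simp only [Finset.sum_mul, Finset.mul_sum]
    refine Finset.sum_congr rfl fun k _ => Finset.sum_congr rfl fun n _ =>
      Finset.sum_congr rfl fun m _ => ?_
    ring
  rw [step1]
  rw [MeasureTheory.integral_finset_sum _ (fun k _ =>
    MeasureTheory.integrable_finset_sum _ (fun n _ =>
      MeasureTheory.integrable_finset_sum _ (fun m _ => (hInt k m).const_mul _)))]
  have step2 : ∀ k : Fin N,
      (∫ y in Set.Icc a b, ∑ n, ∑ m, (A n m * p n x * c k) * (p k y * q m y * w y))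
        = ∑ n, ∑ m, (A n m * p n x * c k) * B m k := by
    intro k
    rw [MeasureTheory.integral_finset_sum _ (fun n _ =>
      MeasureTheory.integrable_finset_sum _ (fun m _ => (hInt k m).const_mul _))]
    refine Finset.sum_congr rfl fun n _ => ?_
    rw [MeasureTheory.integral_finset_sum _ (fun m _ => (hInt k m).const_mul _)]
    refine Finset.sum_congr rfl fun m _ => ?_
    rw [MeasureTheory.integral_const_mul, hB]
  simp only [step2]
  rw [Finset.sum_comm]
  simp only [Matrix.mulVec, dotProduct, Finset.sum_mul, Finset.mul_sum]
  refine Finset.sum_congr rfl fun n _ => ?_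
  rw [Finset.sum_comm]
  refine Finset.sum_congr rfl fun k _ => Finset.sum_congr rfl fun m _ => ?_
  ring

theorem stmt_5 (N M r : ℕ) (ℓ : Fin r → ℕ) (lam : Fin r → ℂ)
    (a b : ℝ) (w : ℝ → ℂ)
    (p : Fin N → ℝ → ℂ) (q : Fin M → ℝ → ℂ)
    (hp : LinearIndependent ℂ p)
    (A : Matrix (Fin N) (Fin M) ℂ) (B : Matrix (Fin M) (Fin N) ℂ)
    (hInt : ∀ i j, IntegrableOn (fun x => p i x * q j x * w x) (Set.Icc a b))
    (hB : ∀ i j, B j i = ∫ x in Set.Icc a b, p i x * q j x * w x)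
    (K : ℝ → ℝ → ℂ) (hK : ∀ x y, K x y = ∑ i, ∑ j, A i j * p i x * q j y)
    (u : Fin r → ℕ → Fin M → ℂ)
    (hu0 : ∀ i, (B * A).mulVec (u i 0) = lam i • u i 0)
    (hne : ∀ i, u i 0 ≠ 0)
    (hchain : ∀ i j, j + 1 < ℓ i →
      (B * A).mulVec (u i (j + 1)) = lam i • u i (j + 1) + u i j)
    (φ : Fin r → ℕ → ℝ → ℂ)
    (hφ : ∀ i j x, φ i j x = ∑ n, A.mulVec (u i j) n * p n x) :
    (∀ i x, (∫ y in Set.Icc a b, K x y * φ i 0 y * w y) = lam i * φ i 0 x) ∧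
      (∀ i j, j + 1 < ℓ i → ∀ x,
        (∫ y in Set.Icc a b, K x y * φ i (j + 1) y * w y)
          = lam i * φ i (j + 1) x + φ i j x) := by
  have hmain : ∀ i j x,
      (∫ y in Set.Icc a b, K x y * φ i j y * w y)
        = ∑ n, A.mulVec ((B * A).mulVec (u i j)) n * p n x := by
    intro i j x
    have : (∫ y in Set.Icc a b, K x y * φ i j y * w y)
        = ∫ y in Set.Icc a b, K x y * (∑ k, A.mulVec (u i j) k * p k y) * w y := by
      apply setIntegral_congr_fun measurableSet_Icc
      intro y _
      simp only [hφ]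
    rw [this, key_int N M a b w p q A B hInt hB K hK (A.mulVec (u i j)) x,
      ← Matrix.mulVec_mulVec]
  constructor
  · intro i x
    rw [hmain, hu0, hφ, Finset.mul_sum]
    simp only [Matrix.mulVec_smul, Pi.smul_apply, smul_eq_mul]
    refine Finset.sum_congr rfl fun n _ => ?_
    ring
  · intro i j hj x
    rw [hmain, hchain i j hj, hφ, hφ, Finset.mul_sum, ← Finset.sum_add_distrib]
    simp only [Matrix.mulVec_add, Matrix.mulVec_smul, Pi.add_apply, Pi.smul_apply,
      smul_eq_mul]
    refine Finset.sum_congr rfl fun n _ => ?_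
    ring
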